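/- Let S and W be real vector spaces, let K ⊆ S be a nonempty convex set, and let T assign to each x ∈ K a nonempty convex subset T(x) ⊆ W. Then: (1) T is affine if and only if T_sus is additive, i.e. T_sus(u) + T_sus(v) = T_sus(u + v) (Minkowski sum) for all u, v ∈ K_sus; (2) T is convex if and only if T_sus is superadditive, i.e. T_sus(u) + T_sus(v) ⊆ T_sus(u + v) for all u, v ∈ K_sus. (T_sus is automatically positively homogeneous.) -/

import Mathlib

open scoped Pointwise

/-- A set-valued map `T` on a convex set `K` is affine (resp. convex) iff its
natural extension `T_sus` to the suspension cone
`K_sus = {(λ, λ • x) : λ > 0, x ∈ K}` is additive (resp. superadditive). -/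
theorem stmt4 {S W : Type*} [AddCommGroup S] [Module ℝ S]
    [AddCommGroup W] [Module ℝ W]
    (K : Set S) (hKne : K.Nonempty) (hKconv : Convex ℝ K)
    (T : S → Set W)
    (hTne : ∀ x ∈ K, (T x).Nonempty) (hTconv : ∀ x ∈ K, Convex ℝ (T x))
    (Tsus : ℝ × S → Set W)
    (hTsus : ∀ l : ℝ, 0 < l → ∀ x ∈ K, Tsus (l, l • x) = l • T x) :
    ((∀ x ∈ K, ∀ y ∈ K, ∀ θ : ℝ, 0 < θ → θ < 1 →
        (1 - θ) • T x + θ • T y = T ((1 - θ) • x + θ • y)) ↔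
      (∀ u ∈ {p : ℝ × S | ∃ l : ℝ, 0 < l ∧ ∃ x ∈ K, p = (l, l • x)},
        ∀ v ∈ {p : ℝ × S | ∃ l : ℝ, 0 < l ∧ ∃ x ∈ K, p = (l, l • x)},
          Tsus u + Tsus v = Tsus (u + v))) ∧
    ((∀ x ∈ K, ∀ y ∈ K, ∀ θ : ℝ, 0 < θ → θ < 1 →
        (1 - θ) • T x + θ • T y ⊆ T ((1 - θ) • x + θ • y)) ↔
      (∀ u ∈ {p : ℝ × S | ∃ l : ℝ, 0 < l ∧ ∃ x ∈ K, p = (l, l • x)},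
        ∀ v ∈ {p : ℝ × S | ∃ l : ℝ, 0 < l ∧ ∃ x ∈ K, p = (l, l • x)},
          Tsus u + Tsus v ⊆ Tsus (u + v))) := by
  constructor
  · constructor
    · rintro h u ⟨a, ha, x, hx, rfl⟩ v ⟨b, hb, y, hy, rfl⟩
      have hs : 0 < a + b := by linarith
      set θ := b / (a + b) with hθdef
      have hθ0 : 0 < θ := div_pos hb hs
      have hθ1 : θ < 1 := by rw [hθdef, div_lt_one hs]; linarith
      have h1θ : 1 - θ = a / (a + b) := by rw [hθdef]; field_simp; ring
      have e1 : (a + b) * (1 - θ) = a := by rw [h1θ]; field_simp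
      have e2 : (a + b) * θ = b := by rw [hθdef]; field_simp
      have hz : (1 - θ) • x + θ • y ∈ K :=
        hKconv hx hy (by linarith) hθ0.le (by ring)
      have hsum : ((a, a • x) + (b, b • y) : ℝ × S)
          = (a + b, (a + b) • ((1 - θ) • x + θ • y)) := by
        rw [Prod.mk_add_mk]
        refine Prod.ext rfl ?_
        rw [smul_add, smul_smul, smul_smul, e1, e2]
      rw [hTsus a ha x hx, hTsus b hb y hy, hsum,
        hTsus (a + b) hs _ hz, ← h x hx y hy θ hθ0 hθ1,
        smul_add, smul_smul, smul_smul, e1, e2]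
    · intro h x hx y hy θ hθ0 hθ1
      have h1 : 0 < 1 - θ := by linarith
      have hz : (1 - θ) • x + θ • y ∈ K :=
        hKconv hx hy h1.le hθ0.le (by ring)
      have key := h (1 - θ, (1 - θ) • x) ⟨1 - θ, h1, x, hx, rfl⟩
        (θ, θ • y) ⟨θ, hθ0, y, hy, rfl⟩
      have hsum : ((1 - θ, (1 - θ) • x) + (θ, θ • y) : ℝ × S)
          = (1, (1 : ℝ) • ((1 - θ) • x + θ • y)) := by
        rw [Prod.mk_add_mk]
        exact Prod.ext (by ring) (by rw [one_smul])
      rw [hTsus _ h1 x hx, hTsus _ hθ0 y hy, hsum,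
        hTsus 1 one_pos _ hz, one_smul] at key
      exact key
  · constructor
    · rintro h u ⟨a, ha, x, hx, rfl⟩ v ⟨b, hb, y, hy, rfl⟩
      have hs : 0 < a + b := by linarith
      set θ := b / (a + b) with hθdef
      have hθ0 : 0 < θ := div_pos hb hs
      have hθ1 : θ < 1 := by rw [hθdef, div_lt_one hs]; linarith
      have h1θ : 1 - θ = a / (a + b) := by rw [hθdef]; field_simp; ring
      have e1 : (a + b) * (1 - θ) = a := by rw [h1θ]; field_simp
      have e2 : (a + b) * θ = b := by rw [hθdef]; field_simp
      have hz : (1 - θ) • x + θ • y ∈ K :=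
        hKconv hx hy (by linarith) hθ0.le (by ring)
      have hsum : ((a, a • x) + (b, b • y) : ℝ × S)
          = (a + b, (a + b) • ((1 - θ) • x + θ • y)) := by
        rw [Prod.mk_add_mk]
        refine Prod.ext rfl ?_
        rw [smul_add, smul_smul, smul_smul, e1, e2]
      rw [hTsus a ha x hx, hTsus b hb y hy, hsum, hTsus (a + b) hs _ hz]
      have : a • T x + b • T y
          = (a + b) • ((1 - θ) • T x + θ • T y) := by
        rw [smul_add, smul_smul, smul_smul, e1, e2]
      rw [this]
      exact Set.smul_set_mono (h x hx y hy θ hθ0 hθ1)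
    · intro h x hx y hy θ hθ0 hθ1
      have h1 : 0 < 1 - θ := by linarith
      have hz : (1 - θ) • x + θ • y ∈ K :=
        hKconv hx hy h1.le hθ0.le (by ring)
      have key := h (1 - θ, (1 - θ) • x) ⟨1 - θ, h1, x, hx, rfl⟩
        (θ, θ • y) ⟨θ, hθ0, y, hy, rfl⟩
      have hsum : ((1 - θ, (1 - θ) • x) + (θ, θ • y) : ℝ × S)
          = (1, (1 : ℝ) • ((1 - θ) • x + θ • y)) := by
        rw [Prod.mk_add_mk]
        exact Prod.ext (by ring) (by rw [one_smul])
      rw [hTsus _ h1 x hx, hTsus _ hθ0 y hy, hsum,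
        hTsus 1 one_pos _ hz, one_smul] at key
      exact key
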